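/- The function p₀(t,x,y) = exp(-½(y - e^{tA}x)ᵀ G_t⁻¹ (y - e^{tA}x)) / (2π √det G_t), with A = [[0,0],[1,0]] and G_t = [[t, t²/2],[t²/2, t³/3]], satisfies the Kolmogorov equation in the x-variable: ∂_t p₀ = x₁ ∂_{x₂} p₀ + ½ ∂²_{x₁} p₀, for every fixed y ∈ ℝ² and t > 0. -/

import Mathlib

open Matrix Real

noncomputable section

/-- The matrix `A = [[0,0],[1,0]]` of the Kolmogorov operator. -/
def A : Matrix (Fin 2) (Fin 2) ℝ := !![0, 0; 1, 0]

/-- The covariance matrix `G_t = [[t, t²/2],[t²/2, t³/3]]`. -/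
def G (t : ℝ) : Matrix (Fin 2) (Fin 2) ℝ := !![t, t^2/2; t^2/2, t^3/3]

/-- The explicit Gaussian fundamental solution of the Kolmogorov operator. -/
def p₀ (t : ℝ) (x y : Fin 2 → ℝ) : ℝ :=
  Real.exp (-(1/2) * ((y - NormedSpace.exp (t • A) *ᵥ x) ⬝ᵥ
      ((G t)⁻¹ *ᵥ (y - NormedSpace.exp (t • A) *ᵥ x)))) /
    (2 * π * Real.sqrt (G t).det)

/-- `p₀` as a function of time and the two coordinates of `x`, for fixed `y`. -/
def P (y : Fin 2 → ℝ) (t x₁ x₂ : ℝ) : ℝ := p₀ t ![x₁, x₂] y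

lemma exp_tA (t : ℝ) : NormedSpace.exp (t • A) = !![1,0;t,1] := by
  have hsq : (t • A) ^ 2 = 0 := by
    ext i j
    fin_cases i <;> fin_cases j <;>
      simp [A, pow_two, Matrix.mul_apply, Fin.sum_univ_two]
  have hzero : ∀ n, 2 ≤ n → (t • A) ^ n = 0 := by
    intro n hn
    rw [← Nat.sub_add_cancel hn, pow_add, hsq, mul_zero]
  rw [NormedSpace.exp_eq_tsum (𝕂 := ℝ)]
  show (∑' n : ℕ, ((n.factorial : ℝ)⁻¹) • (t • A) ^ n) = _
  rw [tsum_eq_sum (s := {0, 1}) ?_]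
  · simp [Finset.sum_pair, A]
    ext i j
    fin_cases i <;> fin_cases j <;> simp [A, Matrix.one_apply]
  · intro n hn
    have h2 : 2 ≤ n := by
      rcases n with _|_|n
      · simp at hn
      · simp at hn
      · omega
    rw [hzero n h2, smul_zero]

lemma G_det (t : ℝ) : (G t).det = t^4/12 := by
  simp [G, Matrix.det_fin_two]; ring

lemma G_inv (t : ℝ) (ht : t ≠ 0) : (G t)⁻¹ = !![4/t, -6/t^2; -6/t^2, 12/t^3] := by
  have : G t * !![4/t, -6/t^2; -6/t^2, 12/t^3] = 1 := by
    ext i j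
    fin_cases i <;> fin_cases j <;>
      · simp [G, Matrix.mul_apply, Fin.sum_univ_two, Matrix.one_apply]
        field_simp
        ring
  exact Matrix.inv_eq_right_inv this

lemma P_eq (y : Fin 2 → ℝ) (x₁ x₂ s : ℝ) (hs : 0 < s) :
    P y s x₁ x₂ = Real.sqrt 3 / π *
      Real.exp ((-2*(y 0 - x₁)^2 - 6*(y 0 - x₁)*x₁ - 6*x₁^2)/s
        + (6*(y 0 - x₁)*(y 1 - x₂) + 12*(y 1 - x₂)*x₁)/s^2
        + (-6*(y 1 - x₂)^2)/s^3) / s^2 := by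
  have hs' : s ≠ 0 := hs.ne'
  have h3 : Real.sqrt 3 > 0 := Real.sqrt_pos.mpr (by norm_num)
  have hsqrt : Real.sqrt ((G s).det) = s^2/(2*Real.sqrt 3) := by
    rw [G_det, show s^4/12 = (s^2/(2*Real.sqrt 3))^2 by
      rw [div_pow]; rw [mul_pow]; rw [Real.sq_sqrt (by norm_num : (3:ℝ) ≥ 0)]; ring]
    exact Real.sqrt_sq (by positivity)
  unfold P p₀
  rw [exp_tA, G_inv s hs', hsqrt]
  have hexp : -(1/2) * ((y - !![1,0;s,1] *ᵥ ![x₁,x₂]) ⬝ᵥ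
      (!![4/s, -6/s^2; -6/s^2, 12/s^3] *ᵥ (y - !![1,0;s,1] *ᵥ ![x₁,x₂]))) =
      ((-2*(y 0 - x₁)^2 - 6*(y 0 - x₁)*x₁ - 6*x₁^2)/s
        + (6*(y 0 - x₁)*(y 1 - x₂) + 12*(y 1 - x₂)*x₁)/s^2
        + (-6*(y 1 - x₂)^2)/s^3) := by
    simp [Matrix.mulVec, dotProduct, Fin.sum_univ_two]
    field_simp
    ring
  rw [hexp]
  rw [eq_div_iff (by positivity)]
  field_simp

/-- The Kolmogorov kernel satisfies `∂ₜ p₀ = x₁ ∂_{x₂} p₀ + ½ ∂²_{x₁} p₀` in the `x`-variable. -/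
theorem stmt_2 (y : Fin 2 → ℝ) (t : ℝ) (ht : 0 < t) (x₁ x₂ : ℝ) :
    deriv (fun s => P y s x₁ x₂) t =
      x₁ * deriv (fun b => P y t x₁ b) x₂ +
        (1/2) * deriv (fun a => deriv (fun a' => P y t a' x₂) a) x₁ := by
  have ht' : t ≠ 0 := ht.ne'
  have hπ : (π : ℝ) ≠ 0 := Real.pi_ne_zero
  set C : ℝ := Real.sqrt 3 / π with hC
  -- abbreviations for the constants in the exponent
  set a₀ : ℝ := -2*(y 0 - x₁)^2 - 6*(y 0 - x₁)*x₁ - 6*x₁^2 with ha₀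
  set b₀ : ℝ := 6*(y 0 - x₁)*(y 1 - x₂) + 12*(y 1 - x₂)*x₁ with hb₀
  set c₀ : ℝ := -6*(y 1 - x₂)^2 with hc₀
  -- 1) time derivative
  have heq_t : (fun s => P y s x₁ x₂) =ᶠ[nhds t]
      (fun s => C * Real.exp (a₀/s + b₀/s^2 + c₀/s^3) / s^2) := by
    filter_upwards [eventually_gt_nhds ht] with s hs
    rw [P_eq y x₁ x₂ s hs]
  have hgt : HasDerivAt (fun s : ℝ => a₀/s + b₀/s^2 + c₀/s^3)
      (-a₀/t^2 - 2*b₀/t^3 - 3*c₀/t^4) t := by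
    have h := ((((hasDerivAt_const t a₀).div (hasDerivAt_id t) ht').add
        ((hasDerivAt_const t b₀).div (hasDerivAt_pow 2 t) (pow_ne_zero 2 ht'))).add
      ((hasDerivAt_const t c₀).div (hasDerivAt_pow 3 t) (pow_ne_zero 3 ht')))
    refine h.congr_deriv ?_
    simp only [id_eq]
    push_cast
    field_simp
    ring
  have hFt := ((hgt.exp.const_mul C).div (hasDerivAt_pow 2 t) (pow_ne_zero 2 ht'))
  have h1 : deriv (fun s => P y s x₁ x₂) t =
      ((C * (Real.exp (a₀/t + b₀/t^2 + c₀/t^3) * (-a₀/t^2 - 2*b₀/t^3 - 3*c₀/t^4))) * t^2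
        - (C * Real.exp (a₀/t + b₀/t^2 + c₀/t^3)) * ((2:ℕ) * t^(2-1))) / (t^2)^2 := by
    rw [Filter.EventuallyEq.deriv_eq heq_t]
    exact hFt.deriv
  -- 2) x₂ derivative
  have heq_b : (fun b => P y t x₁ b) =
      (fun b => C * Real.exp (a₀/t
        + (6*(y 0 - x₁)*(y 1 - b) + 12*(y 1 - b)*x₁)/t^2
        + (-6*(y 1 - b)^2)/t^3) / t^2) := by
    funext b
    rw [P_eq y x₁ b t ht]
  have hw : HasDerivAt (fun b : ℝ => y 1 - b) (-1) x₂ := by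
    simpa using (hasDerivAt_id x₂).const_sub (y 1)
  have hg₂ : HasDerivAt (fun b : ℝ => a₀/t
        + (6*(y 0 - x₁)*(y 1 - b) + 12*(y 1 - b)*x₁)/t^2
        + (-6*(y 1 - b)^2)/t^3)
      ((-6*(y 0 - x₁) - 12*x₁)/t^2 + 12*(y 1 - x₂)/t^3) x₂ := by
    have h := (((hasDerivAt_const x₂ (a₀/t)).add
        (((hw.const_mul (6*(y 0 - x₁))).add ((hw.const_mul 12).mul_const x₁)).div_const (t^2))).add
      (((hw.pow 2).const_mul (-6)).div_const (t^3)))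
    refine h.congr_deriv ?_
    push_cast
    ring
  have h2 : deriv (fun b => P y t x₁ b) x₂ =
      C * (Real.exp (a₀/t + b₀/t^2 + c₀/t^3) *
        ((-6*(y 0 - x₁) - 12*x₁)/t^2 + 12*(y 1 - x₂)/t^3)) / t^2 := by
    rw [heq_b]
    exact ((hg₂.exp.const_mul C).div_const (t^2)).deriv
  -- 3) second x₁ derivative
  have hu : ∀ a : ℝ, HasDerivAt (fun a' : ℝ => y 0 - a') (-1) a := by
    intro a
    simpa using (hasDerivAt_id a).const_sub (y 0)
  have hg₁ : ∀ a : ℝ, HasDerivAt (fun a' : ℝ =>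
      (-2*(y 0 - a')^2 - 6*(y 0 - a')*a' - 6*a'^2)/t
        + (6*(y 0 - a')*(y 1 - x₂) + 12*(y 1 - x₂)*a')/t^2
        + (-6*(y 1 - x₂)^2)/t^3)
      ((-2*(y 0 - a) - 6*a)/t + 6*(y 1 - x₂)/t^2) a := by
    intro a
    have h := (((((((hu a).pow 2).const_mul (-2)).sub
        (((hu a).const_mul 6).mul (hasDerivAt_id a))).sub
        ((hasDerivAt_pow 2 a).const_mul 6)).div_const t).add
      (((((hu a).const_mul 6).mul_const (y 1 - x₂)).add
        ((hasDerivAt_id a).const_mul (12*(y 1 - x₂)))).div_const (t^2))).add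
      (hasDerivAt_const a ((-6*(y 1 - x₂)^2)/t^3))
    refine h.congr_deriv ?_
    simp only [id_eq]
    push_cast
    ring
  have hinner : ∀ a : ℝ, deriv (fun a' => P y t a' x₂) a =
      C * (Real.exp ((-2*(y 0 - a)^2 - 6*(y 0 - a)*a - 6*a^2)/t
        + (6*(y 0 - a)*(y 1 - x₂) + 12*(y 1 - x₂)*a)/t^2
        + (-6*(y 1 - x₂)^2)/t^3) *
        ((-2*(y 0 - a) - 6*a)/t + 6*(y 1 - x₂)/t^2)) / t^2 := by
    intro a
    have heq_a : (fun a' => P y t a' x₂) =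
        (fun a' => C * Real.exp ((-2*(y 0 - a')^2 - 6*(y 0 - a')*a' - 6*a'^2)/t
          + (6*(y 0 - a')*(y 1 - x₂) + 12*(y 1 - x₂)*a')/t^2
          + (-6*(y 1 - x₂)^2)/t^3) / t^2) := by
      funext a'
      rw [P_eq y a' x₂ t ht]
    rw [heq_a]
    exact (((hg₁ a).exp.const_mul C).div_const (t^2)).deriv
  have hψ : HasDerivAt (fun a : ℝ => (-2*(y 0 - a) - 6*a)/t + 6*(y 1 - x₂)/t^2)
      (-4/t) x₁ := by
    have h := ((((hu x₁).const_mul (-2)).sub ((hasDerivAt_id x₁).const_mul 6)).div_const t).add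
      (hasDerivAt_const x₁ (6*(y 1 - x₂)/t^2))
    refine h.congr_deriv ?_
    norm_num
  have houter := ((((hg₁ x₁).exp.mul hψ).const_mul C).div_const (t^2))
  have h3 : deriv (fun a => deriv (fun a' => P y t a' x₂) a) x₁ =
      C * (Real.exp (a₀/t + b₀/t^2 + c₀/t^3) *
          ((-2*(y 0 - x₁) - 6*x₁)/t + 6*(y 1 - x₂)/t^2) *
          ((-2*(y 0 - x₁) - 6*x₁)/t + 6*(y 1 - x₂)/t^2)
        + Real.exp (a₀/t + b₀/t^2 + c₀/t^3) * (-4/t)) / t^2 := by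
    have : (fun a => deriv (fun a' => P y t a' x₂) a) =
        (fun a => C * (Real.exp ((-2*(y 0 - a)^2 - 6*(y 0 - a)*a - 6*a^2)/t
          + (6*(y 0 - a)*(y 1 - x₂) + 12*(y 1 - x₂)*a)/t^2
          + (-6*(y 1 - x₂)^2)/t^3) *
          ((-2*(y 0 - a) - 6*a)/t + 6*(y 1 - x₂)/t^2)) / t^2) := by
      funext a; exact hinner a
    rw [this]
    exact houter.deriv
  rw [h1, h2, h3]
  have hX : Real.exp (a₀/t + b₀/t^2 + c₀/t^3) ≠ 0 := Real.exp_ne_zero _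
  rw [ha₀, hb₀, hc₀]
  field_simp
  ring
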